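/- Let $1 \le p \le 2$. There exists a constant $C_p$ such that for any finitely many functions $f_1, \dots, f_N \in L^p(\mathbb{R})$, one has $\left(\sum_{j=1}^N \|f_j\|_p^2\right)^{1/2} \le C_p \int_0^1 \left\|\sum_{j=1}^N r_j(t) f_j\right\|_p \, dt$, where $r_j$ are the Rademacher functions. -/

import Mathlib

open MeasureTheory
open scoped ENNReal

/-- The Rademacher functions `r_n(t) = sign (sin (2^n π t))` on `[0,1]`. -/
noncomputable def rademacher (n : ℕ) (t : ℝ) : ℝ :=
  Real.sign (Real.sin (2 ^ n * Real.pi * t))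

section AuxRademacher
open Finset

/-- The sign pattern: value of the `m`-th bit of `j` as `±1`. -/
def rsign (m j : ℕ) : ℝ := if j.testBit m then -1 else 1

lemma rsign_abs_le (m j : ℕ) : |rsign m j| ≤ 1 := by
  unfold rsign; split <;> norm_num

lemma rademacher_eq_of_floor (n : ℕ) (t : ℝ) (k : ℕ)
    (h1 : (k : ℝ) < 2 ^ n * t) (h2 : 2 ^ n * t < k + 1) :
    rademacher n t = (-1) ^ k := by
  have hx : (2:ℝ) ^ n * Real.pi * t = Real.pi * (2 ^ n * t - k) + (k : ℤ) * Real.pi := by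
    push_cast; ring
  have hs : Real.sin (2 ^ n * Real.pi * t)
      = (-1) ^ k * Real.sin (Real.pi * (2 ^ n * t - k)) := by
    rw [hx, Real.sin_add_int_mul_pi]
    norm_num
  have hpos : 0 < Real.sin (Real.pi * (2 ^ n * t - k)) := by
    apply Real.sin_pos_of_pos_of_lt_pi
    · have : (0:ℝ) < 2 ^ n * t - k := by linarith
      positivity
    · have h3 : 2 ^ n * t - k < 1 := by linarith
      nlinarith [Real.pi_pos, Real.pi_gt_three]
  unfold rademacher
  rw [hs]
  rcases Nat.even_or_odd k with he | ho
  · rw [he.neg_one_pow, one_mul, Real.sign_of_pos hpos]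
  · rw [ho.neg_one_pow, neg_one_mul, Real.sign_of_neg (by linarith)]

lemma rademacher_on_dyadic (N : ℕ) (i : ℕ) (hi : i < N) (j : ℕ) (t : ℝ)
    (ht1 : (j : ℝ) / 2 ^ N < t) (ht2 : t < (j + 1 : ℝ) / 2 ^ N) :
    rademacher (i + 1) t = rsign (N - 1 - i) j := by
  set m := N - 1 - i with hm
  have hNm : N = (i + 1) + m := by omega
  set k := j / 2 ^ m with hk
  have hposn : 0 < 2 ^ m := by positivity
  have hjk1 : k * 2 ^ m ≤ j := Nat.div_mul_le_self j (2 ^ m)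
  have hjk2 : j < (k + 1) * 2 ^ m := by
    rw [hk]
    exact (Nat.div_lt_iff_lt_mul hposn).mp (Nat.lt_succ_self k)
  have h2N : (2:ℝ) ^ N = 2 ^ (i+1) * 2 ^ m := by rw [hNm, pow_add]
  have hpow : (0:ℝ) < 2 ^ m := by positivity
  have hpow2 : (0:ℝ) < 2 ^ (i+1) := by positivity
  have hdiv : ((j:ℝ)) / 2 ^ m = (j:ℝ) / 2 ^ N * 2 ^ (i+1) := by
    rw [h2N]; field_simp
  have hdiv' : ((j:ℝ) + 1) / 2 ^ m = ((j:ℝ) + 1) / 2 ^ N * 2 ^ (i+1) := by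
    rw [h2N]; field_simp
  have h1 : (k : ℝ) < 2 ^ (i + 1) * t := by
    have hkle : (k:ℝ) ≤ (j:ℝ) / 2 ^ m := by
      rw [le_div_iff₀ hpow]
      calc (k:ℝ) * 2 ^ m = ((k * 2 ^ m : ℕ) : ℝ) := by push_cast; ring
        _ ≤ j := Nat.cast_le.mpr hjk1
    have := mul_lt_mul_of_pos_right ht1 hpow2
    rw [← hdiv] at this
    linarith
  have h2 : 2 ^ (i + 1) * t < (k : ℝ) + 1 := by
    have hkge : ((j:ℝ) + 1) / 2 ^ m ≤ (k:ℝ) + 1 := by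
      rw [div_le_iff₀ hpow]
      calc ((j:ℝ) + 1) = ((j + 1 : ℕ) : ℝ) := by push_cast; ring
        _ ≤ (((k + 1) * 2 ^ m : ℕ) : ℝ) := Nat.cast_le.mpr hjk2
        _ = ((k:ℝ) + 1) * 2 ^ m := by push_cast; ring
    have := mul_lt_mul_of_pos_right ht2 hpow2
    rw [← hdiv'] at this
    linarith
  rw [rademacher_eq_of_floor (i+1) t k h1 h2]
  unfold rsign
  rw [Nat.testBit_eq_decide_div_mod_eq, ← hk]
  rcases Nat.even_or_odd k with he | ho
  · have h2 : ¬ (k % 2 = 1) := by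
      have := Nat.even_iff.mp he; omega
    simp [h2, he.neg_one_pow]
  · have h2 : k % 2 = 1 := Nat.odd_iff.mp ho
    simp [h2, ho.neg_one_pow]


/-- Discrete Rademacher sum. -/
def rsum (N : ℕ) (a : ℕ → ℝ) (j : ℕ) : ℝ := ∑ i ∈ range N, a i * rsign i j

lemma sum_range_two_pow_succ (N : ℕ) (F : ℕ → ℝ) :
    ∑ j ∈ range (2 ^ (N + 1)), F j
      = ∑ j ∈ range (2 ^ N), F j + ∑ j ∈ range (2 ^ N), F (2 ^ N + j) := by
  have h : 2 ^ (N + 1) = 2 ^ N + 2 ^ N := by ring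
  have hd : Disjoint (range (2 ^ N)) ((range (2 ^ N)).map (addLeftEmbedding (2 ^ N))) := by
    refine Finset.disjoint_left.mpr ?_
    intro x hx hx2
    simp only [Finset.mem_map, Finset.mem_range, addLeftEmbedding_apply] at hx hx2
    omega
  rw [h, Finset.range_add, Finset.sum_union hd, Finset.sum_map]
  simp [addLeftEmbedding_apply]

lemma rsum_succ_left (N : ℕ) (a : ℕ → ℝ) (j : ℕ) (hj : j < 2 ^ N) :
    rsum (N + 1) a j = rsum N a j + a N := by
  unfold rsum
  rw [Finset.sum_range_succ]
  congr 1
  unfold rsign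
  rw [Nat.testBit_lt_two_pow hj]
  simp

lemma rsum_succ_right (N : ℕ) (a : ℕ → ℝ) (j : ℕ) (hj : j < 2 ^ N) :
    rsum (N + 1) a (2 ^ N + j) = rsum N a j - a N := by
  unfold rsum
  rw [Finset.sum_range_succ]
  have h1 : ∀ i ∈ range N, a i * rsign i (2 ^ N + j) = a i * rsign i j := by
    intro i hi
    simp only [Finset.mem_range] at hi
    unfold rsign
    rw [Nat.testBit_two_pow_add_gt hi]
  rw [Finset.sum_congr rfl h1]
  have h2 : rsign N (2 ^ N + j) = -1 := by
    unfold rsign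
    rw [Nat.testBit_two_pow_add_eq, Nat.testBit_lt_two_pow hj]
    simp
  rw [h2]; ring

lemma moment2 (N : ℕ) (a : ℕ → ℝ) :
    ∑ j ∈ range (2 ^ N), (rsum N a j) ^ 2 = 2 ^ N * ∑ i ∈ range N, (a i) ^ 2 := by
  induction N generalizing a with
  | zero => simp [rsum]
  | succ N ih =>
    rw [sum_range_two_pow_succ]
    have h1 : ∀ j ∈ range (2 ^ N), (rsum (N+1) a j) ^ 2 = (rsum N a j + a N) ^ 2 := by
      intro j hj; rw [rsum_succ_left N a j (Finset.mem_range.mp hj)]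
    have h2 : ∀ j ∈ range (2 ^ N), (rsum (N+1) a (2^N + j)) ^ 2 = (rsum N a j - a N) ^ 2 := by
      intro j hj; rw [rsum_succ_right N a j (Finset.mem_range.mp hj)]
    rw [Finset.sum_congr rfl h1, Finset.sum_congr rfl h2, ← Finset.sum_add_distrib]
    have h3 : ∀ j ∈ range (2 ^ N),
        (rsum N a j + a N) ^ 2 + (rsum N a j - a N) ^ 2
          = 2 * (rsum N a j) ^ 2 + 2 * (a N) ^ 2 := by
      intro j _; ring
    rw [Finset.sum_congr rfl h3, Finset.sum_add_distrib, ← Finset.mul_sum, ih,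
      Finset.sum_const, Finset.card_range, Finset.sum_range_succ]
    push_cast
    ring

lemma moment4 (N : ℕ) (a : ℕ → ℝ) :
    ∑ j ∈ range (2 ^ N), (rsum N a j) ^ 4
      ≤ 3 * 2 ^ N * (∑ i ∈ range N, (a i) ^ 2) ^ 2 := by
  induction N generalizing a with
  | zero => simp [rsum]
  | succ N ih =>
    rw [sum_range_two_pow_succ]
    have h1 : ∀ j ∈ range (2 ^ N), (rsum (N+1) a j) ^ 4 = (rsum N a j + a N) ^ 4 := by
      intro j hj; rw [rsum_succ_left N a j (Finset.mem_range.mp hj)]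
    have h2 : ∀ j ∈ range (2 ^ N), (rsum (N+1) a (2^N + j)) ^ 4 = (rsum N a j - a N) ^ 4 := by
      intro j hj; rw [rsum_succ_right N a j (Finset.mem_range.mp hj)]
    rw [Finset.sum_congr rfl h1, Finset.sum_congr rfl h2, ← Finset.sum_add_distrib]
    have h3 : ∀ j ∈ range (2 ^ N),
        (rsum N a j + a N) ^ 4 + (rsum N a j - a N) ^ 4
          = 2 * (rsum N a j) ^ 4 + 12 * (a N) ^ 2 * (rsum N a j) ^ 2 + 2 * (a N) ^ 4 := by
      intro j _; ring
    rw [Finset.sum_congr rfl h3]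
    rw [Finset.sum_add_distrib, Finset.sum_add_distrib, ← Finset.mul_sum, ← Finset.mul_sum,
      moment2, Finset.sum_const, Finset.card_range, Finset.sum_range_succ, nsmul_eq_mul]
    have hP : (0:ℝ) < 2 ^ N := by positivity
    have hV : (0:ℝ) ≤ ∑ i ∈ range N, (a i) ^ 2 := by positivity
    have := ih a
    have h2p : (2:ℝ) ^ (N+1) = 2 ^ N * 2 := by ring
    push_cast
    nlinarith [this, hP, sq_nonneg (a N), mul_nonneg (le_of_lt hP) (sq_nonneg ((a N) ^ 2)), h2p]

lemma khintchine_discrete (N : ℕ) (a : ℕ → ℝ) :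
    Real.sqrt (∑ i ∈ range N, (a i) ^ 2)
      ≤ Real.sqrt 3 * (((2:ℝ) ^ N)⁻¹ * ∑ j ∈ range (2 ^ N), |rsum N a j|) := by
  set V := ∑ i ∈ range N, (a i) ^ 2 with hV
  set A := ∑ j ∈ range (2 ^ N), |rsum N a j| with hA
  set P := (2:ℝ) ^ N with hP
  have hPpos : (0:ℝ) < P := by positivity
  have hVnn : 0 ≤ V := by positivity
  have hAnn : 0 ≤ A := by positivity
  have key : V ≤ 3 * (P⁻¹ * A) ^ 2 := by
    rcases eq_or_lt_of_le hVnn with hV0 | hVpos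
    · rw [← hV0]; positivity
    · set B := ∑ j ∈ range (2 ^ N), (rsum N a j) ^ 2 with hB
      set C := ∑ j ∈ range (2 ^ N), |rsum N a j| ^ 3 with hC
      set D := ∑ j ∈ range (2 ^ N), (rsum N a j) ^ 4 with hD
      have hBV : B = P * V := by rw [hB, moment2, hV, hP]
      have hD3 : D ≤ 3 * P * V ^ 2 := by
        have := moment4 N a
        rw [hD, hP, hV]; linarith
      have hCS1 : B ^ 2 ≤ A * C := by
        have h := Finset.sum_mul_sq_le_sq_mul_sq (range (2 ^ N))
          (fun j => Real.sqrt |rsum N a j|)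
          (fun j => |rsum N a j| * Real.sqrt |rsum N a j|)
        have e1 : ∀ j ∈ range (2 ^ N),
            Real.sqrt |rsum N a j| * (|rsum N a j| * Real.sqrt |rsum N a j|)
              = (rsum N a j) ^ 2 := by
          intro j _
          rw [← sq_abs]
          have h0 : (0:ℝ) ≤ |rsum N a j| := abs_nonneg _
          rw [show Real.sqrt |rsum N a j| * (|rsum N a j| * Real.sqrt |rsum N a j|)
              = (Real.sqrt |rsum N a j| * Real.sqrt |rsum N a j|) * |rsum N a j| by ring,
            Real.mul_self_sqrt h0]
          ring
        have e2 : ∀ j ∈ range (2 ^ N),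
            (Real.sqrt |rsum N a j|) ^ 2 = |rsum N a j| := by
          intro j _; exact Real.sq_sqrt (abs_nonneg _)
        have e3 : ∀ j ∈ range (2 ^ N),
            (|rsum N a j| * Real.sqrt |rsum N a j|) ^ 2 = |rsum N a j| ^ 3 := by
          intro j _
          rw [mul_pow, Real.sq_sqrt (abs_nonneg _)]
          ring
        rw [Finset.sum_congr rfl e1, Finset.sum_congr rfl e2, Finset.sum_congr rfl e3] at h
        rw [hB, hA, hC]; exact h
      have hCS2 : C ^ 2 ≤ B * D := by
        have h := Finset.sum_mul_sq_le_sq_mul_sq (range (2 ^ N))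
          (fun j => |rsum N a j|) (fun j => (rsum N a j) ^ 2)
        have e1 : ∀ j ∈ range (2 ^ N),
            |rsum N a j| * (rsum N a j) ^ 2 = |rsum N a j| ^ 3 := by
          intro j _; rw [← sq_abs]; ring
        have e2 : ∀ j ∈ range (2 ^ N), |rsum N a j| ^ 2 = (rsum N a j) ^ 2 := by
          intro j _; exact sq_abs _
        have e3 : ∀ j ∈ range (2 ^ N), ((rsum N a j) ^ 2) ^ 2 = (rsum N a j) ^ 4 := by
          intro j _; ring
        rw [Finset.sum_congr rfl e1, Finset.sum_congr rfl e2, Finset.sum_congr rfl e3] at h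
        rw [hC, hB, hD]; exact h
      have hBnn : 0 ≤ B := by rw [hB]; positivity
      have hCnn : 0 ≤ C := by rw [hC]; positivity
      have hB4 : B ^ 4 ≤ A ^ 2 * C ^ 2 := by
        calc B ^ 4 = (B ^ 2) ^ 2 := by ring
          _ ≤ (A * C) ^ 2 := by
              apply pow_le_pow_left₀ (sq_nonneg B) hCS1
          _ = A ^ 2 * C ^ 2 := by ring
      have hchain : B ^ 4 ≤ A ^ 2 * (B * (3 * P * V ^ 2)) := by
        calc B ^ 4 ≤ A ^ 2 * C ^ 2 := hB4
          _ ≤ A ^ 2 * (B * D) := mul_le_mul_of_nonneg_left hCS2 (sq_nonneg A)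
          _ ≤ A ^ 2 * (B * (3 * P * V ^ 2)) := by
              apply mul_le_mul_of_nonneg_left _ (sq_nonneg A)
              exact mul_le_mul_of_nonneg_left hD3 hBnn
      rw [hBV] at hchain
      have hgoal : V * P ^ 2 ≤ 3 * A ^ 2 := by
        nlinarith [hchain, mul_pos (mul_pos hPpos hPpos) (mul_pos hVpos (mul_pos hVpos hVpos))]
      have : 3 * (P⁻¹ * A) ^ 2 = 3 * A ^ 2 / P ^ 2 := by
        field_simp
      rw [this, le_div_iff₀ (by positivity)]
      linarith
  calc Real.sqrt V ≤ Real.sqrt (3 * (P⁻¹ * A) ^ 2) := Real.sqrt_le_sqrt key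
    _ = Real.sqrt 3 * (P⁻¹ * A) := by
        rw [Real.sqrt_mul (by norm_num), Real.sqrt_sq (by positivity)]


lemma integral_dyadic_step (N : ℕ) (φ : ℕ → ℝ) (H : ℝ → ℝ)
    (hH : ∀ j : ℕ, j < 2 ^ N → ∀ t ∈ Set.Ioo ((j:ℝ)/2^N) (((j:ℝ)+1)/2^N), H t = φ j) :
    ∫ t in Set.Ioo (0:ℝ) 1, H t = ((2:ℝ)^N)⁻¹ * ∑ j ∈ range (2^N), φ j := by
  set I : ℕ → Set ℝ := fun j => Set.Ioo ((j:ℝ)/2^N) (((j:ℝ)+1)/2^N) with hI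
  have hPpos : (0:ℝ) < 2 ^ N := by positivity
  have hmeas : ∀ j, MeasurableSet (I j) := fun j => measurableSet_Ioo
  have hvol : ∀ j, volume (I j) = ENNReal.ofReal (((2:ℝ)^N)⁻¹) := by
    intro j
    rw [hI]
    simp only [Real.volume_Ioo]
    congr 1
    field_simp
    ring
  have hdisj : (↑(range (2^N)) : Set ℕ).Pairwise (Function.onFun Disjoint I) := by
    intro i _ j _ hij
    rw [Function.onFun, Set.disjoint_left]
    intro t hti htj
    rw [hI] at hti htj
    simp only [Set.mem_Ioo] at hti htj
    rcases Nat.lt_or_ge i j with h | h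
    · have : ((i:ℝ)+1)/2^N ≤ (j:ℝ)/2^N := by
        gcongr
        have : (i:ℕ) + 1 ≤ j := h
        exact_mod_cast this
      linarith [hti.2, htj.1]
    · have hji : j < i := by omega
      have : ((j:ℝ)+1)/2^N ≤ (i:ℝ)/2^N := by
        gcongr
        have : (j:ℕ) + 1 ≤ i := hji
        exact_mod_cast this
      linarith [hti.1, htj.2]
  have hsub : (⋃ j ∈ range (2^N), I j) ⊆ Set.Ioo (0:ℝ) 1 := by
    intro t ht
    simp only [Set.mem_iUnion, Finset.mem_range] at ht
    obtain ⟨j, hj, htj⟩ := ht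
    rw [hI] at htj
    simp only [Set.mem_Ioo] at htj ⊢
    constructor
    · have : (0:ℝ) ≤ (j:ℝ)/2^N := by positivity
      linarith [htj.1]
    · have : ((j:ℝ)+1)/2^N ≤ 1 := by
        rw [div_le_one hPpos]
        have : (j:ℕ) + 1 ≤ 2^N := hj
        exact_mod_cast this
      linarith [htj.2]
  have hvolU : volume (⋃ j ∈ range (2^N), I j) = 1 := by
    rw [measure_biUnion_finset hdisj (fun j _ => hmeas j)]
    rw [Finset.sum_congr rfl (fun j _ => hvol j), Finset.sum_const, Finset.card_range,
      nsmul_eq_mul]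
    have h1 : ENNReal.ofReal (((2:ℝ)^N)⁻¹) = ((2:ℝ≥0∞)^N)⁻¹ := by
      rw [ENNReal.ofReal_inv_of_pos hPpos, ENNReal.ofReal_pow (by norm_num)]
      norm_num
    rw [h1]
    push_cast
    exact ENNReal.mul_inv_cancel (by positivity) (by exact ENNReal.pow_ne_top (by norm_num))
  have haeeq : (⋃ j ∈ range (2^N), I j) =ᵐ[volume] Set.Ioo (0:ℝ) 1 := by
    apply MeasureTheory.ae_eq_of_subset_of_measure_ge hsub
    · rw [hvolU, Real.volume_Ioo]; simp
    · exact (MeasurableSet.biUnion (Finset.countable_toSet _)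
        (fun j _ => hmeas j)).nullMeasurableSet
    · rw [Real.volume_Ioo]; simp
  have hint : ∀ j ∈ range (2^N), IntegrableOn H (I j) volume := by
    intro j hj
    have heq : Set.EqOn H (fun _ => φ j) (I j) := fun t ht => hH j (mem_range.mp hj) t ht
    rw [integrableOn_congr_fun heq (hmeas j)]
    refine (integrableOn_const_iff).mpr (Or.inr ?_)
    rw [hvol j]
    exact ENNReal.ofReal_lt_top
  rw [← setIntegral_congr_set haeeq,
    integral_biUnion_finset (range (2^N)) (fun j _ => hmeas j) hdisj hint]
  have hval : ∀ j ∈ range (2^N), ∫ t in I j, H t = ((2:ℝ)^N)⁻¹ * φ j := by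
    intro j hj
    have heq : Set.EqOn H (fun _ => φ j) (I j) := fun t ht => hH j (mem_range.mp hj) t ht
    rw [setIntegral_congr_fun (hmeas j) heq, setIntegral_const, measureReal_def, hvol j,
      ENNReal.toReal_ofReal (by positivity), smul_eq_mul]
  rw [Finset.sum_congr rfl hval, ← Finset.mul_sum]


lemma sq_norm_sum_le {α : Type*} [MeasurableSpace α] (μ : Measure α) {pr : ℝ}
    (hpr1 : 1 ≤ pr) (hpr2 : pr ≤ 2) {N : ℕ} (u : Fin N → α → ℝ≥0∞)
    (hu : ∀ i, AEMeasurable (u i) μ) (hufin : ∀ i x, u i x ≠ ∞) :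
    ∑ i, (∫⁻ x, u i x ^ pr ∂μ) ^ (2 / pr)
      ≤ (∫⁻ x, (∑ i, u i x ^ (2:ℝ)) ^ (pr / 2) ∂μ) ^ (2 / pr) := by
  have hprpos : 0 < pr := lt_of_lt_of_le one_pos hpr1
  set S : α → ℝ≥0∞ := fun x => ∑ i, u i x ^ (2:ℝ) with hSdef
  have hS : AEMeasurable S μ := Finset.aemeasurable_fun_sum _ (fun i _ => (hu i).pow_const _)
  have hSfin : ∀ x, S x ≠ ∞ := by
    intro x
    rw [hSdef]
    exact ENNReal.sum_ne_top.mpr fun i _ =>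
      ENNReal.rpow_ne_top_of_nonneg (by norm_num) (hufin i x)
  have huS : ∀ i x, S x = 0 → u i x = 0 := by
    intro i x h
    have h1 : u i x ^ (2:ℝ) ≤ S x :=
      Finset.single_le_sum (f := fun i => u i x ^ (2:ℝ)) (fun _ _ => zero_le') (mem_univ i)
    rw [h] at h1
    have h2 : u i x ^ (2:ℝ) = 0 := le_antisymm h1 zero_le'
    rcases ENNReal.rpow_eq_zero_iff.mp h2 with ⟨h3, _⟩ | ⟨_, h4⟩
    · exact h3
    · norm_num at h4
  set T : ℝ≥0∞ := ∫⁻ x, S x ^ (pr / 2) ∂μ with hTdef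
  rcases eq_or_lt_of_le hpr2 with hpr2' | hpr2'
  · -- pr = 2
    subst hpr2'
    rw [hTdef]
    have h22 : (2:ℝ)/2 = 1 := by norm_num
    simp only [h22, ENNReal.rpow_one]
    have hls := lintegral_finset_sum' (μ := μ) Finset.univ
      (f := fun i x => u i x ^ ((2:ℝ))) (fun i _ => (hu i).pow_const _)
    rw [← hls]
  · -- pr < 2
    have h2pr : (2:ℝ) - pr ≠ 0 := by linarith
    have hconj : Real.HolderConjugate (2/pr) (2/(2-pr)) := by
      rw [Real.holderConjugate_iff]
      constructor
      · exact (one_lt_div hprpos).mpr hpr2'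
      · rw [inv_div, inv_div, ← add_div]
        norm_num
    set v : Fin N → α → ℝ≥0∞ := fun i x => u i x ^ (2:ℝ) * S x ^ ((pr-2)/2) with hvdef
    have hv : ∀ i, AEMeasurable (v i) μ := fun i => ((hu i).pow_const _).mul (hS.pow_const _)
    have hpoint : ∀ i x, u i x ^ pr = (v i x) ^ (pr/2) * (S x ^ (pr/2)) ^ ((2-pr)/2) := by
      intro i x
      by_cases hx : S x = 0
      · have hu0 : u i x = 0 := huS i x hx
        simp only [hvdef, hx, hu0]
        rw [ENNReal.zero_rpow_of_pos hprpos,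
          ENNReal.zero_rpow_of_pos (by norm_num : (0:ℝ) < 2),
          ENNReal.zero_rpow_of_neg (by linarith : (pr-2)/2 < 0), zero_mul,
          ENNReal.zero_rpow_of_pos (by positivity : (0:ℝ) < pr/2), zero_mul]
      · have hfin := hSfin x
        simp only [hvdef]
        rw [ENNReal.mul_rpow_of_nonneg _ _ (by positivity : (0:ℝ) ≤ pr/2),
          ← ENNReal.rpow_mul, ← ENNReal.rpow_mul, ← ENNReal.rpow_mul, mul_assoc,
          ← ENNReal.rpow_add _ _ hx hfin,
          show (pr-2)/2*(pr/2) + pr/2*((2-pr)/2) = 0 by ring, ENNReal.rpow_zero, mul_one,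
          show (2:ℝ)*(pr/2) = pr by ring]
    have hHolder : ∀ i, (∫⁻ x, u i x ^ pr ∂μ)
        ≤ (∫⁻ x, v i x ∂μ) ^ (pr/2) * T ^ ((2-pr)/2) := by
      intro i
      have h := ENNReal.lintegral_mul_le_Lp_mul_Lq μ hconj
        ((hv i).pow_const (pr/2)) ((hS.pow_const (pr/2)).pow_const ((2-pr)/2))
      have e0 : ∫⁻ x, u i x ^ pr ∂μ
          = ∫⁻ x, ((fun y => v i y ^ (pr/2)) * fun y => (S y ^ (pr/2)) ^ ((2-pr)/2)) x ∂μ := by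
        apply lintegral_congr
        intro x
        simp only [Pi.mul_apply]
        exact hpoint i x
      rw [e0]
      refine h.trans (le_of_eq ?_)
      have c1 : ∫⁻ x, (v i x ^ (pr/2)) ^ (2/pr) ∂μ = ∫⁻ x, v i x ∂μ := by
        apply lintegral_congr
        intro x
        rw [← ENNReal.rpow_mul, show (pr/2)*(2/pr) = 1 by field_simp, ENNReal.rpow_one]
      have c2 : ∫⁻ x, ((S x ^ (pr/2)) ^ ((2-pr)/2)) ^ (2/(2-pr)) ∂μ = T := by
        apply lintegral_congr
        intro x
        rw [← ENNReal.rpow_mul, show ((2-pr)/2)*(2/(2-pr)) = 1 by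
          field_simp, ENNReal.rpow_one]
      rw [c1, c2, one_div_div, one_div_div]
    have key : ∀ i, (∫⁻ x, u i x ^ pr ∂μ) ^ (2/pr)
        ≤ (∫⁻ x, v i x ∂μ) * T ^ ((2-pr)/pr) := by
      intro i
      have h := ENNReal.rpow_le_rpow (hHolder i) (by positivity : (0:ℝ) ≤ 2/pr)
      rwa [ENNReal.mul_rpow_of_nonneg _ _ (by positivity : (0:ℝ) ≤ 2/pr),
        ← ENNReal.rpow_mul, ← ENNReal.rpow_mul,
        show (pr/2)*(2/pr) = 1 by field_simp, ENNReal.rpow_one,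
        show ((2-pr)/2)*(2/pr) = (2-pr)/pr by field_simp] at h
    have hsumv : ∫⁻ x, ∑ i, v i x ∂μ = T := by
      apply lintegral_congr
      intro x
      by_cases hx : S x = 0
      · have : ∀ i ∈ univ, v i x = 0 := by
          intro i _
          simp only [hvdef, huS i x hx, hx]
          rw [ENNReal.zero_rpow_of_pos (by norm_num : (0:ℝ) < 2), zero_mul]
        rw [Finset.sum_congr rfl this, Finset.sum_const, smul_zero, hx,
          ENNReal.zero_rpow_of_pos (by positivity : (0:ℝ) < pr/2)]
      · simp only [hvdef]
        rw [← Finset.sum_mul]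
        have : ∑ i, u i x ^ (2:ℝ) = S x := rfl
        rw [this]
        nth_rewrite 1 [← ENNReal.rpow_one (S x)]
        rw [← ENNReal.rpow_add _ _ hx (hSfin x)]
        congr 1
        ring
    calc ∑ i, (∫⁻ x, u i x ^ pr ∂μ) ^ (2 / pr)
        ≤ ∑ i, (∫⁻ x, v i x ∂μ) * T ^ ((2-pr)/pr) := Finset.sum_le_sum (fun i _ => key i)
      _ = (∑ i, ∫⁻ x, v i x ∂μ) * T ^ ((2-pr)/pr) := by rw [Finset.sum_mul]
      _ = (∫⁻ x, ∑ i, v i x ∂μ) * T ^ ((2-pr)/pr) := by rw [lintegral_finset_sum' _ (fun i _ => hv i)]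
      _ = T * T ^ ((2-pr)/pr) := by rw [hsumv]
      _ = T ^ ((1:ℝ) + (2-pr)/pr) := by
          rw [ENNReal.rpow_add_of_nonneg 1 ((2-pr)/pr) (by norm_num)
            (by apply div_nonneg <;> linarith),
            ENNReal.rpow_one]
      _ = T ^ (2/pr) := by
          congr 1
          field_simp
          ring


lemma coeFn_sum_ae {α E : Type*} [MeasurableSpace α] {μ : Measure α} [NormedAddCommGroup E]
    {p : ℝ≥0∞} {ι : Type*} (s : Finset ι) (g : ι → Lp E p μ) :
    (⇑(∑ i ∈ s, g i) : α → E) =ᵐ[μ] fun x => ∑ i ∈ s, g i x := by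
  classical
  induction s using Finset.induction_on with
  | empty =>
      simp only [Finset.sum_empty]
      exact Lp.coeFn_zero E p μ
  | insert a s ha ih =>
      rw [Finset.sum_insert ha]
      filter_upwards [Lp.coeFn_add (g a) (∑ i ∈ s, g i), ih] with x h1 h2
      rw [h1]
      simp only [Pi.add_apply, h2]
      rw [Finset.sum_insert ha]


end AuxRademacher

/-- for `1 ≤ p ≤ 2`, `L^p(ℝ)` has cotype 2: there is a constant `C_p` with
`(∑ ‖f_j‖_p^2)^{1/2} ≤ C_p ∫_0^1 ‖∑ r_j(t) f_j‖_p dt` for all finite families. -/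
theorem Lp_cotype_two
    (p : ℝ≥0∞) [Fact (1 ≤ p)] (hp2 : p ≤ 2) :
    ∃ C : ℝ, ∀ (N : ℕ) (f : Fin N → Lp ℝ p (volume : Measure ℝ)),
      (∑ j, ‖f j‖ ^ 2) ^ (1/2 : ℝ) ≤
        C * ∫ t in Set.Ioo (0:ℝ) 1, ‖∑ j : Fin N, rademacher ((j : ℕ) + 1) t • f j‖ := by
  classical
  refine ⟨Real.sqrt 3, fun N f => ?_⟩
  have hp1 : 1 ≤ p := Fact.out
  have hptop : p ≠ ⊤ := (lt_of_le_of_lt hp2 (by norm_num)).ne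
  have hp0 : p ≠ 0 := by
    intro h; rw [h] at hp1; exact absurd hp1 (by simp)
  set pr := p.toReal with hprdef
  have hpr1 : 1 ≤ pr := by
    rw [hprdef, ← ENNReal.toReal_one]
    exact (ENNReal.toReal_le_toReal (by norm_num) hptop).mpr hp1
  have hpr2 : pr ≤ 2 := by
    rw [hprdef, show (2:ℝ) = (2:ℝ≥0∞).toReal by simp]
    exact (ENNReal.toReal_le_toReal hptop (by norm_num)).mpr hp2
  have hprpos : 0 < pr := by linarith
  set F : ℕ → Lp ℝ p (volume : Measure ℝ) :=
    fun j => ∑ i : Fin N, rsign (N - 1 - (i:ℕ)) j • f i with hFdef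
  set M : ℝ := ((2:ℝ)^N)⁻¹ * ∑ j ∈ Finset.range (2^N), ‖F j‖ with hMdef
  have hMnn : 0 ≤ M := by
    rw [hMdef]
    apply mul_nonneg (by positivity)
    exact Finset.sum_nonneg (fun j _ => norm_nonneg _)
  -- Step A : the integral equals the discrete average
  have hInt : (∫ t in Set.Ioo (0:ℝ) 1, ‖∑ i : Fin N, rademacher ((i:ℕ)+1) t • f i‖) = M := by
    rw [hMdef]
    apply integral_dyadic_step N (fun j => ‖F j‖)
    intro j hj t ht
    congr 1
    rw [hFdef]
    apply Finset.sum_congr rfl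
    intro i _
    rw [rademacher_on_dyadic N (i:ℕ) i.isLt j t ht.1 ht.2]
  -- coercion of F j
  have hFcoe : ∀ j : ℕ, (⇑(F j) : ℝ → ℝ)
      =ᵐ[volume] fun x => ∑ i : Fin N, rsign (N-1-(i:ℕ)) j * (f i x) := by
    intro j
    rw [hFdef]
    have h1 := coeFn_sum_ae Finset.univ (fun i : Fin N => rsign (N - 1 - (i:ℕ)) j • f i)
    have h2 : ∀ᵐ x ∂(volume : Measure ℝ), ∀ i ∈ Finset.univ (α := Fin N),
        (⇑(rsign (N-1-(i:ℕ)) j • f i) : ℝ → ℝ) x = rsign (N-1-(i:ℕ)) j * f i x := by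
      rw [Filter.eventually_all_finset]
      intro i _
      filter_upwards [Lp.coeFn_smul (rsign (N-1-(i:ℕ)) j) (f i)] with x hx
      rw [hx]; rfl
    filter_upwards [h1, h2] with x hx1 hx2
    rw [hx1]
    exact Finset.sum_congr rfl (fun i hi => hx2 i hi)
  set G : ℝ → ℝ := fun x => Real.sqrt (∑ i : Fin N, (f i x)^2) with hGdef
  -- Step B : pointwise Khintchine
  have hae : ∀ᵐ x ∂(volume : Measure ℝ),
      G x ≤ Real.sqrt 3 * (((2:ℝ)^N)⁻¹ * ∑ j ∈ Finset.range (2^N), |F j x|) := by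
    have hall : ∀ᵐ x ∂(volume : Measure ℝ), ∀ j ∈ Finset.range (2^N),
        (F j) x = ∑ i : Fin N, rsign (N-1-(i:ℕ)) j * f i x := by
      rw [Filter.eventually_all_finset]
      intro j _
      exact hFcoe j
    filter_upwards [hall] with x hx
    set a : ℕ → ℝ := fun m => if hm : m < N then f (⟨N-1-m, by omega⟩ : Fin N) x else 0
      with hadef
    have eq1 : ∑ m ∈ Finset.range N, a m ^2 = ∑ i : Fin N, (f i x)^2 := by
      set φ : ℕ → ℝ := fun m => if hm : m < N then (f (⟨m, hm⟩ : Fin N) x)^2 else 0 with hφ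
      have e1 : ∑ i : Fin N, (f i x)^2 = ∑ i : Fin N, φ (i:ℕ) := by
        apply Finset.sum_congr rfl
        intro i _
        rw [hφ]
        simp [i.isLt]
      rw [e1, Fin.sum_univ_eq_sum_range, ← Finset.sum_range_reflect]
      apply Finset.sum_congr rfl
      intro m hm
      have hmN : m < N := Finset.mem_range.mp hm
      have h1 : N - 1 - m < N := by omega
      simp only [hφ, hadef]
      rw [dif_pos h1, dif_pos hmN]
      have h3 : N - 1 - (N - 1 - m) = m := by omega
      simp [h3]
    have eq2 : ∀ j, rsum N a j = ∑ i : Fin N, rsign (N-1-(i:ℕ)) j * f i x := by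
      intro j
      set ψ : ℕ → ℝ := fun m =>
        if hm : m < N then rsign (N-1-m) j * f (⟨m, hm⟩ : Fin N) x else 0 with hψ
      have e1 : ∑ i : Fin N, rsign (N-1-(i:ℕ)) j * f i x = ∑ i : Fin N, ψ (i:ℕ) := by
        apply Finset.sum_congr rfl
        intro i _
        rw [hψ]
        simp [i.isLt]
      rw [e1, Fin.sum_univ_eq_sum_range, ← Finset.sum_range_reflect]
      unfold rsum
      apply Finset.sum_congr rfl
      intro m hm
      have hmN : m < N := Finset.mem_range.mp hm
      have h1 : N - 1 - m < N := by omega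
      have h2 : N - 1 - (N - 1 - m) = m := by omega
      simp only [hψ, hadef]
      rw [dif_pos h1, dif_pos hmN, h2]
      ring
    have K := khintchine_discrete N a
    rw [eq1] at K
    rw [hGdef]
    refine K.trans (le_of_eq ?_)
    congr 2
    apply Finset.sum_congr rfl
    intro j hj
    rw [eq2 j, ← hx j hj]
  -- Step C : eLpNorm of G bounded
  set c : ℝ := Real.sqrt 3 * ((2:ℝ)^N)⁻¹ with hcdef
  have hcnn : 0 ≤ c := by rw [hcdef]; positivity
  have hGle : eLpNorm G p volume ≤ ENNReal.ofReal (Real.sqrt 3 * M) := by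
    have h1 : eLpNorm G p volume
        ≤ eLpNorm (fun x => c * ∑ j ∈ Finset.range (2^N), |F j x|) p volume := by
      apply eLpNorm_mono_ae
      filter_upwards [hae] with x hx
      rw [Real.norm_eq_abs, Real.norm_eq_abs]
      set s : ℝ := ∑ j ∈ Finset.range (2^N), |F j x| with hsdef
      calc |G x| = G x := abs_of_nonneg (by simp only [hGdef]; exact Real.sqrt_nonneg _)
        _ ≤ Real.sqrt 3 * (((2:ℝ)^N)⁻¹ * s) := hx
        _ = c * s := by rw [hcdef]; ring
        _ ≤ |c * s| := le_abs_self _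
    have h2 : eLpNorm (fun x => c * ∑ j ∈ Finset.range (2^N), |F j x|) p volume
        = ↑‖c‖₊ * eLpNorm (fun x => ∑ j ∈ Finset.range (2^N), |F j x|) p volume := by
      rw [← enorm_eq_nnnorm, ← eLpNorm_const_smul c (fun x => ∑ j ∈ Finset.range (2^N), |F j x|) p volume]
      rfl
    have h3 : eLpNorm (fun x => ∑ j ∈ Finset.range (2^N), |F j x|) p volume
        ≤ ∑ j ∈ Finset.range (2^N), eLpNorm (⇑(F j) : ℝ → ℝ) p volume := by
      have h4 : (fun x => ∑ j ∈ Finset.range (2^N), |F j x|)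
          = ∑ j ∈ Finset.range (2^N), (fun x => |F j x|) := by
        funext x
        rw [Finset.sum_apply]
      rw [h4]
      refine (eLpNorm_sum_le (fun j _ => ?_) hp1).trans ?_
      · have := (Lp.aestronglyMeasurable (F j)).norm
        simpa [Real.norm_eq_abs] using this
      · apply Finset.sum_le_sum
        intro j _
        apply le_of_eq
        have h5 : (fun x => |F j x|) = fun x => ‖F j x‖ := by
          funext x
          rw [Real.norm_eq_abs]
        rw [h5, eLpNorm_norm]
    calc eLpNorm G p volume
        ≤ ↑‖c‖₊ * ∑ j ∈ Finset.range (2^N), eLpNorm (⇑(F j) : ℝ → ℝ) p volume := by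
          refine h1.trans ?_
          rw [h2]
          exact mul_le_mul_right h3 _
      _ = ENNReal.ofReal (Real.sqrt 3 * M) := by
          rw [hMdef, show Real.sqrt 3 * (((2:ℝ)^N)⁻¹ * ∑ j ∈ Finset.range (2^N), ‖F j‖)
            = c * ∑ j ∈ Finset.range (2^N), ‖F j‖ by rw [hcdef]; ring]
          rw [ENNReal.ofReal_mul hcnn,
            ENNReal.ofReal_sum_of_nonneg (fun j _ => norm_nonneg _)]
          congr 1
          · exact Real.enorm_eq_ofReal hcnn
          · apply Finset.sum_congr rfl
            intro j _
            rw [Lp.norm_def, ENNReal.ofReal_toReal (Lp.eLpNorm_ne_top (F j))]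
  have hGne : eLpNorm G p volume ≠ ⊤ :=
    ne_top_of_le_ne_top ENNReal.ofReal_ne_top hGle
  -- square function inequality
  have hsq0 := sq_norm_sum_le (volume : Measure ℝ) hpr1 hpr2
    (fun (i : Fin N) (x : ℝ) => (‖f i x‖₊ : ℝ≥0∞))
    (fun i => (Lp.aestronglyMeasurable (f i)).enorm)
    (fun i x => ENNReal.coe_ne_top)
  have hG : eLpNorm G p volume
      = (∫⁻ x, (∑ i : Fin N, ((‖f i x‖₊:ℝ≥0∞)) ^ (2:ℝ)) ^ (pr/2) ∂volume) ^ (1/pr) := by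
    rw [eLpNorm_eq_lintegral_rpow_enorm_toReal hp0 hptop]
    congr 1
    apply lintegral_congr
    intro x
    have hs : (0:ℝ) ≤ ∑ i : Fin N, (f i x)^2 := by positivity
    rw [hGdef]
    simp only []
    rw [Real.enorm_eq_ofReal (Real.sqrt_nonneg _), Real.sqrt_eq_rpow,
      ← ENNReal.ofReal_rpow_of_nonneg hs (by norm_num : (0:ℝ) ≤ 1/2),
      ENNReal.ofReal_sum_of_nonneg (fun i _ => sq_nonneg _)]
    have he : ∀ i : Fin N, ENNReal.ofReal ((f i x)^2) = ((‖f i x‖₊:ℝ≥0∞)) ^ (2:ℝ) := by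
      intro i
      rw [← sq_abs, ENNReal.ofReal_pow (abs_nonneg _), ← Real.enorm_eq_ofReal_abs,
        ← ENNReal.rpow_natCast]
      norm_num
      rfl
    rw [Finset.sum_congr rfl (fun i _ => he i), ← ENNReal.rpow_mul]
    congr 1
    ring
  have hfi : ∀ i : Fin N,
      ‖f i‖^2 = ((∫⁻ x, ((‖f i x‖₊:ℝ≥0∞)) ^ pr ∂volume) ^ (2/pr)).toReal := by
    intro i
    set X := ∫⁻ x, ((‖f i x‖₊:ℝ≥0∞)) ^ pr ∂volume with hX
    rw [Lp.norm_def, eLpNorm_eq_lintegral_rpow_enorm_toReal hp0 hptop]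
    simp only [enorm_eq_nnnorm]
    rw [← hprdef, ← hX,
      show ((X ^ (1/pr)).toReal)^2 = ((X ^ (1/pr)).toReal)^(((2:ℕ)):ℝ) by
        rw [Real.rpow_natCast],
      ENNReal.toReal_rpow, ← ENNReal.rpow_mul,
      show (1/pr) * (((2:ℕ)):ℝ) = 2/pr by push_cast; ring]
  have hTi_ne : ∀ i : Fin N, (∫⁻ x, ((‖f i x‖₊:ℝ≥0∞)) ^ pr ∂volume) ≠ ⊤ := by
    intro i
    have h := Lp.eLpNorm_ne_top (f i)
    rw [eLpNorm_eq_lintegral_rpow_enorm_toReal hp0 hptop] at h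
    simp only [enorm_eq_nnnorm] at h
    intro hcontra
    rw [hcontra, ENNReal.top_rpow_of_pos (by positivity)] at h
    exact h rfl
  have main : ∑ i : Fin N, ‖f i‖^2 ≤ (Real.sqrt 3 * M)^2 := by
    have e1 : ∑ i : Fin N, ‖f i‖^2
        = (∑ i : Fin N, (∫⁻ x, ((‖f i x‖₊:ℝ≥0∞)) ^ pr ∂volume) ^ (2/pr)).toReal := by
      rw [ENNReal.toReal_sum (fun i _ =>
        ENNReal.rpow_ne_top_of_nonneg (by positivity) (hTi_ne i))]
      exact Finset.sum_congr rfl (fun i _ => hfi i)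
    have e2 : (∫⁻ x, (∑ i : Fin N, ((‖f i x‖₊:ℝ≥0∞)) ^ (2:ℝ)) ^ (pr/2) ∂volume) ^ (2/pr)
        = (eLpNorm G p volume) ^ (2:ℝ) := by
      rw [hG, ← ENNReal.rpow_mul]
      congr 1
      field_simp
    rw [e2] at hsq0
    have hsum_ne : (∑ i : Fin N, (∫⁻ x, ((‖f i x‖₊:ℝ≥0∞)) ^ pr ∂volume) ^ (2/pr)) ≠ ⊤ :=
      ENNReal.sum_ne_top.mpr (fun i _ =>
        ENNReal.rpow_ne_top_of_nonneg (by positivity) (hTi_ne i))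
    have hGpow_ne : (eLpNorm G p volume) ^ (2:ℝ) ≠ ⊤ :=
      ENNReal.rpow_ne_top_of_nonneg (by norm_num) hGne
    rw [e1]
    calc (∑ i : Fin N, (∫⁻ x, ((‖f i x‖₊:ℝ≥0∞)) ^ pr ∂volume) ^ (2/pr)).toReal
        ≤ ((eLpNorm G p volume) ^ (2:ℝ)).toReal :=
          (ENNReal.toReal_le_toReal hsum_ne hGpow_ne).mpr hsq0
      _ ≤ ((ENNReal.ofReal (Real.sqrt 3 * M)) ^ (2:ℝ)).toReal := by
          apply (ENNReal.toReal_le_toReal hGpow_ne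
            (ENNReal.rpow_ne_top_of_nonneg (by norm_num) ENNReal.ofReal_ne_top)).mpr
          exact ENNReal.rpow_le_rpow hGle (by norm_num)
      _ = (Real.sqrt 3 * M)^2 := by
          rw [← ENNReal.toReal_rpow, ENNReal.toReal_ofReal (by positivity)]
          norm_num
  rw [hInt, ← Real.sqrt_eq_rpow]
  calc Real.sqrt (∑ i : Fin N, ‖f i‖^2)
      ≤ Real.sqrt ((Real.sqrt 3 * M)^2) := Real.sqrt_le_sqrt main
    _ = Real.sqrt 3 * M := Real.sqrt_sq (by positivity)
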